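/- arXiv:1711.00175 — 3 statements merged into one kernel-verified Lean document; each statement's English description precedes it below -/
import Mathlib

section
/- Let 1 ≤ s_1 < s_2 < … < s_k be integers with gcd(s_1,…,s_k) = 1, and let F(X) = 2k·X^{s_k} − ∑_{j=1}^{k}(X^{s_k+s_j} + X^{s_k−s_j}), the polynomial version of the Laurent polynomial L(z) = 2k − ∑_{j=1}^{k}(z^{s_j} + z^{−s_j}). Then 1 is a root of F of multiplicity exactly 2, and every complex root ζ of F with |ζ| = 1 satisfies ζ = 1. Consequently the roots of L are 1,1, z_1, z_1^{−1}, …, z_{s_k−1}, z_{s_k−1}^{−1} with |z_s| ≠ 1 for all s = 1,…,s_k−1. -/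
open Polynomial Complex Finset
open scoped Classical

/-- The circulant graph `C_n(s 0, …, s (k-1))` on vertex set `ZMod n`:
`i` is adjacent to `i ± s j (mod n)` for each `j`. -/
def circulant (n : ℕ) {k : ℕ} (s : Fin k → ℕ) : SimpleGraph (ZMod n) :=
  SimpleGraph.circulantGraph {x : ZMod n | ∃ j : Fin k, x = (s j : ZMod n)}

/-- The odd-valency circulant graph `C_{2n}(s 0, …, s (k-1), n)` on vertex set `ZMod (2n)`:
`i` is adjacent to `i ± s j (mod 2n)` for each `j`, and to `i + n (mod 2n)`. -/
def circulantOdd (n : ℕ) {k : ℕ} (s : Fin k → ℕ) : SimpleGraph (ZMod (2 * n)) :=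
  SimpleGraph.circulantGraph
    ({x : ZMod (2 * n) | ∃ j : Fin k, x = (s j : ZMod (2 * n))} ∪ {(n : ZMod (2 * n))})

/-- The number of spanning trees of `G`: the number of subgraphs of `G` (on the same
vertex set) that are trees. -/
noncomputable def numSpanningTrees {V : Type*} (G : SimpleGraph V) : ℕ :=
  Set.ncard {H : SimpleGraph V | H ≤ G ∧ H.IsTree}

lemma aux_sub_mul (a b : ℕ) (h : b ≤ a) :
    ((a - b : ℕ) : ℂ) * ((a - b - 1 : ℕ) : ℂ) = ((a:ℂ) - b) * ((a:ℂ) - b - 1) := by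
  rcases eq_or_lt_of_le h with rfl | h'
  · simp
  · have h1 : 1 ≤ a - b := by omega
    push_cast [Nat.cast_sub h, Nat.cast_sub h1]
    ring

set_option maxRecDepth 8000 in
/-- for `gcd(s_1,…,s_k) = 1`, the polynomial
`F(X) = 2k X^{s_k} - ∑_{j=1}^k (X^{s_k+s_j} + X^{s_k-s_j})` (the polynomial version of
`L(z) = 2k - ∑ (z^{s_j} + z^{-s_j})`) has `1` as a root of multiplicity exactly `2`,
and every root of `F` of modulus one equals `1`. -/
theorem statement4 (k : ℕ) (hk : 0 < k) (s : Fin k → ℕ)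
    (hmono : StrictMono s) (h1 : ∀ j, 1 ≤ s j)
    (hgcd : Finset.univ.gcd s = 1) :
    let sk := s ⟨k - 1, Nat.sub_lt hk Nat.one_pos⟩
    let F : Polynomial ℂ := C (2 * (k : ℂ)) * X ^ sk
        - ∑ j : Fin k, (X ^ (sk + s j) + X ^ (sk - s j))
    F.rootMultiplicity 1 = 2 ∧
      ∀ ζ : ℂ, F.eval ζ = 0 → ‖ζ‖ = 1 → ζ = 1 := by
  intro sk F
  have hFdef : F = C (2 * (k : ℂ)) * X ^ sk
      - ∑ j : Fin k, (X ^ (sk + s j) + X ^ (sk - s j)) := rfl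
  haveI : Nonempty (Fin k) := ⟨⟨0, hk⟩⟩
  have hsk_le : ∀ j : Fin k, s j ≤ sk := by
    intro j
    refine hmono.monotone ?_
    rw [Fin.le_def]
    have := j.isLt
    simp only []
    omega
  have hsk1 : 1 ≤ sk := h1 _
  have heval : ∀ z : ℂ, F.eval z =
      2 * k * z ^ sk - ∑ j : Fin k, (z ^ (sk + s j) + z ^ (sk - s j)) := by
    intro z
    simp [hFdef, eval_finset_sum]
  -- Part 2
  have part2 : ∀ ζ : ℂ, F.eval ζ = 0 → ‖ζ‖ = 1 → ζ = 1 := by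
    intro ζ h0 habs
    have hζ : ζ ≠ 0 := by
      intro h; rw [h] at habs; simp at habs
    have hwabs : ∀ j : Fin k, ‖ζ ^ s j‖ = 1 := by
      intro j; rw [norm_pow, habs, one_pow]
    have hkey : ∑ j : Fin k, ((ζ ^ s j) + (ζ ^ s j)⁻¹) = 2 * k := by
      have hmul : ζ ^ sk * (2 * (k:ℂ) - ∑ j : Fin k, ((ζ ^ s j) + (ζ ^ s j)⁻¹)) = 0 := by
        rw [heval ζ] at h0
        rw [mul_sub, Finset.mul_sum, ← h0]
        congr 1
        · ring
        · refine Finset.sum_congr rfl fun j _ => ?_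
          rw [mul_add, ← pow_add, pow_sub₀ ζ hζ (hsk_le j)]
      rcases mul_eq_zero.mp hmul with h | h
      · exact absurd h (pow_ne_zero _ hζ)
      · exact (sub_eq_zero.mp h).symm
    have hconj : ∀ j : Fin k, (ζ ^ s j)⁻¹ = (starRingEnd ℂ) (ζ ^ s j) := by
      intro j
      rw [Complex.inv_def, Complex.normSq_eq_norm_sq, hwabs j]
      simp
    have hkey2 : ∑ j : Fin k, (2 * ((ζ ^ s j).re : ℂ)) = 2 * k := by
      rw [← hkey]
      refine Finset.sum_congr rfl fun j _ => ?_
      rw [hconj j, Complex.add_conj]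
      push_cast
      ring
    have hsum : ∑ j : Fin k, (ζ ^ s j).re = (k : ℝ) := by
      have h2 : ((∑ j : Fin k, (ζ ^ s j).re : ℝ) : ℂ) = ((k : ℝ) : ℂ) := by
        push_cast
        rw [← Finset.mul_sum] at hkey2
        have := mul_left_cancel₀ (two_ne_zero' ℂ) hkey2
        push_cast at this
        exact this
      exact_mod_cast h2
    have hone : ∀ j : Fin k, (ζ ^ s j).re = 1 := by
      have hle : ∀ j ∈ (Finset.univ : Finset (Fin k)), (ζ ^ s j).re ≤ 1 :=
        fun j _ => (Complex.re_le_norm _).trans_eq (hwabs j)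
      have heq : ∑ j : Fin k, (ζ ^ s j).re = ∑ _j : Fin k, (1 : ℝ) := by
        rw [hsum]; simp
      intro j
      exact (Finset.sum_eq_sum_iff_of_le hle).mp heq j (Finset.mem_univ j)
    have hpow : ∀ j : Fin k, ζ ^ s j = 1 := by
      intro j
      have hsq : (ζ ^ s j).re * (ζ ^ s j).re + (ζ ^ s j).im * (ζ ^ s j).im = 1 := by
        have hn : Complex.normSq (ζ ^ s j) = 1 := by
          rw [← Complex.sq_norm, hwabs j]; norm_num
        simpa [Complex.normSq_apply] using hn
      rw [hone j] at hsq
      have him : (ζ ^ s j).im = 0 := by nlinarith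
      exact Complex.ext (by rw [hone j]; rfl) (by rw [him]; rfl)
    have hdvd : orderOf ζ ∣ 1 := by
      rw [← hgcd]
      exact Finset.dvd_gcd fun j _ => orderOf_dvd_of_pow_eq_one (hpow j)
    exact orderOf_eq_one_iff.mp (Nat.dvd_one.mp hdvd)
  -- Part 1
  have hD0 : F.eval 1 = 0 := by
    rw [heval]
    simp [Finset.sum_const, Finset.card_univ]
    ring
  have hdF : derivative F = C (2 * (k:ℂ)) * (C (sk:ℂ) * X ^ (sk - 1))
      - ∑ j : Fin k, (C ((sk + s j : ℕ):ℂ) * X ^ (sk + s j - 1)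
        + C ((sk - s j : ℕ):ℂ) * X ^ (sk - s j - 1)) := by
    rw [hFdef, derivative_sub, derivative_C_mul, derivative_X_pow, derivative_sum]
    congr 1
    refine Finset.sum_congr rfl fun j _ => ?_
    rw [derivative_add, derivative_X_pow, derivative_X_pow]
  have hddF : derivative (derivative F) =
      C (2 * (k:ℂ)) * (C (sk:ℂ) * (C ((sk - 1 : ℕ):ℂ) * X ^ (sk - 1 - 1)))
      - ∑ j : Fin k, (C ((sk + s j : ℕ):ℂ) * (C ((sk + s j - 1 : ℕ):ℂ) * X ^ (sk + s j - 1 - 1))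
        + C ((sk - s j : ℕ):ℂ) * (C ((sk - s j - 1 : ℕ):ℂ) * X ^ (sk - s j - 1 - 1))) := by
    rw [hdF, derivative_sub, derivative_C_mul, derivative_C_mul, derivative_X_pow,
      derivative_sum]
    congr 1
    refine Finset.sum_congr rfl fun j _ => ?_
    rw [derivative_add, derivative_C_mul, derivative_C_mul, derivative_X_pow, derivative_X_pow]
  have hD1 : (derivative F).eval 1 = 0 := by
    rw [hdF]
    simp only [eval_sub, eval_mul, eval_C, eval_pow, eval_X, eval_finset_sum, eval_add,
      one_pow, mul_one]
    have : ∀ j : Fin k, (((sk + s j : ℕ) : ℂ) + ((sk - s j : ℕ) : ℂ)) = 2 * (sk : ℂ) := by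
      intro j
      rw [Nat.cast_sub (hsk_le j)]
      push_cast
      ring
    rw [Finset.sum_congr rfl fun j _ => this j]
    simp [Finset.sum_const, Finset.card_univ]
    ring
  have hD2 : (derivative (derivative F)).eval 1 = -2 * ∑ j : Fin k, (s j : ℂ) ^ 2 := by
    rw [hddF]
    simp only [eval_sub, eval_mul, eval_C, eval_pow, eval_X, eval_finset_sum, eval_add,
      one_pow, mul_one]
    have hterm : ∀ j : Fin k, (((sk + s j : ℕ) : ℂ) * ((sk + s j - 1 : ℕ) : ℂ)
        + ((sk - s j : ℕ) : ℂ) * ((sk - s j - 1 : ℕ) : ℂ))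
        = (2 * (sk : ℂ) ^ 2 - 2 * (sk : ℂ)) + 2 * (s j : ℂ) ^ 2 := by
      intro j
      have e1 : ((sk + s j : ℕ) : ℂ) * ((sk + s j - 1 : ℕ) : ℂ)
          = ((sk : ℂ) + s j) * ((sk : ℂ) + s j - 1) := by
        rw [Nat.cast_sub (show 1 ≤ sk + s j by omega)]
        push_cast
        ring
      rw [e1, aux_sub_mul sk (s j) (hsk_le j)]
      ring
    rw [Finset.sum_congr rfl fun j _ => hterm j, Finset.sum_add_distrib,
      Finset.sum_const, Finset.card_univ, Nat.cast_sub hsk1, ← Finset.mul_sum]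
    simp only [Fintype.card_fin, nsmul_eq_mul]
    push_cast
    ring
  have hD2ne : (derivative (derivative F)).eval 1 ≠ 0 := by
    rw [hD2]
    have hnat : ((∑ j : Fin k, (s j) ^ 2 : ℕ) : ℂ) = ∑ j : Fin k, (s j : ℂ) ^ 2 := by
      push_cast; rfl
    rw [← hnat]
    refine mul_ne_zero (by norm_num) ?_
    rw [Nat.cast_ne_zero]
    have : 0 < ∑ j : Fin k, (s j) ^ 2 := by
      refine Finset.sum_pos (fun j _ => ?_) Finset.univ_nonempty
      have := h1 j; positivity
    omega
  have hFne : F ≠ 0 := by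
    intro h
    apply hD2ne
    rw [h]
    simp
  have hlow : 1 < F.rootMultiplicity 1 :=
    (one_lt_rootMultiplicity_iff_isRoot hFne).mpr ⟨hD0, hD1⟩
  have hhigh : ¬ 2 < F.rootMultiplicity 1 := by
    rw [lt_rootMultiplicity_iff_isRoot_iterate_derivative_of_mem_nonZeroDivisors hFne
      (mem_nonZeroDivisors_of_ne_zero (by norm_num))]
    push_neg
    exact ⟨2, le_refl 2, hD2ne⟩
  exact ⟨by omega, part2⟩
end

section
/- Let z_1, …, z_m be nonzero complex numbers none of which equals 1, let H(z) = ∏_{s=1}^{m} (z − z_s)(z − z_s^{−1}), and let n ≥ 1 with ε_n = e^{2πi/n}. Then ∏_{j=1}^{n−1} H(ε_n^j) = ∏_{s=1}^{m} (T_n(w_s) − 1)/(w_s − 1), where w_s = (z_s + z_s^{−1})/2. -/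
open Polynomial Complex Finset
open scoped Classical

lemma auxA {n : ℕ} (hn : 0 < n) {ζ : ℂ} (hζ : IsPrimitiveRoot ζ n) (a : ℂ) :
    ∏ j ∈ Finset.range n, (a - ζ ^ j) = a ^ n - 1 := by
  have hinj : Set.InjOn (ζ ^ ·) (Finset.range n) := fun i hi j hj h =>
    hζ.injOn_pow (by simpa using hi) (by simpa using hj) h
  have himg : (Finset.range n).image (ζ ^ ·) = Polynomial.nthRootsFinset n (1 : ℂ) := by
    apply Finset.eq_of_subset_of_card_le
    · intro x hx
      simp only [Finset.mem_image, Finset.mem_range] at hx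
      obtain ⟨j, _, rfl⟩ := hx
      rw [Polynomial.mem_nthRootsFinset hn (1 : ℂ), ← pow_mul, mul_comm, pow_mul, hζ.pow_eq_one, one_pow]
    · rw [hζ.card_nthRootsFinset, Finset.card_image_of_injOn hinj]
      simp
  have h := congrArg (Polynomial.eval a) (Polynomial.X_pow_sub_one_eq_prod hn hζ)
  simp only [Polynomial.eval_sub, Polynomial.eval_pow, Polynomial.eval_X, Polynomial.eval_one,
    Polynomial.eval_prod, Polynomial.eval_sub, Polynomial.eval_C] at h
  rw [h, ← himg, Finset.prod_image hinj]

lemma auxB (n : ℕ) {z : ℂ} (hz : z ≠ 0) :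
    (Polynomial.Chebyshev.T ℂ n).eval ((z + z⁻¹) / 2) = (z ^ n + (z⁻¹) ^ n) / 2 := by
  have h := congrArg (Polynomial.eval (z + z⁻¹)) (Polynomial.dickson_one_one_eq_chebyshev_T ℂ n)
  rw [Polynomial.dickson_one_one_eval_add_inv z z⁻¹ (mul_inv_cancel₀ hz)] at h
  simp only [Polynomial.eval_mul, Polynomial.eval_ofNat, Polynomial.eval_comp,
    Polynomial.eval_mul, Polynomial.eval_C, Polynomial.eval_X] at h
  have h2 : (⅟2 : ℂ) * (z + z⁻¹) = (z + z⁻¹) / 2 := by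
    rw [invOf_eq_inv]; ring
  rw [h2] at h
  linear_combination -h / 2

/-- for nonzero complex numbers `z_1,…,z_m`, none equal to `1`, and
`H(z) = ∏_{s=1}^m (z - z_s)(z - z_s⁻¹)`, one has
`∏_{j=1}^{n-1} H(ε_n^j) = ∏_{s=1}^m (T_n(w_s) - 1)/(w_s - 1)` where `ε_n = e^{2πi/n}`
and `w_s = (z_s + z_s⁻¹)/2`. -/
theorem statement5 (m : ℕ) (z : Fin m → ℂ) (hz0 : ∀ s, z s ≠ 0) (hz1 : ∀ s, z s ≠ 1)
    (n : ℕ) (hn : 1 ≤ n) :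
    ∏ j ∈ Finset.Ico 1 n,
        ∏ s : Fin m,
          ((Complex.exp (2 * Real.pi * Complex.I / n) ^ (j : ℤ) - z s) *
            (Complex.exp (2 * Real.pi * Complex.I / n) ^ (j : ℤ) - (z s)⁻¹)) =
      ∏ s : Fin m,
        (((Polynomial.Chebyshev.T ℂ n).eval ((z s + (z s)⁻¹) / 2) - 1) /
          ((z s + (z s)⁻¹) / 2 - 1)) := by
  have hn0 : 0 < n := hn
  set ζ : ℂ := Complex.exp (2 * Real.pi * Complex.I / n) with hζdef
  have hζ : IsPrimitiveRoot ζ n := by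
    exact Complex.isPrimitiveRoot_exp n (by omega)
  rw [Finset.prod_comm]
  refine Finset.prod_congr rfl fun s _ => ?_
  set a : ℂ := z s with hadef
  have ha0 : a ≠ 0 := hz0 s
  have ha1 : a ≠ 1 := hz1 s
  have hai1 : a⁻¹ ≠ 1 := by
    intro h
    exact ha1 (by rw [← inv_inv a, h, inv_one])
  simp only [zpow_natCast]
  have key : ∏ j ∈ Finset.range n, ((ζ ^ j - a) * (ζ ^ j - a⁻¹))
      = (a ^ n - 1) * ((a⁻¹) ^ n - 1) := by
    calc ∏ j ∈ Finset.range n, ((ζ ^ j - a) * (ζ ^ j - a⁻¹))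
        = ∏ j ∈ Finset.range n, ((a - ζ ^ j) * (a⁻¹ - ζ ^ j)) :=
          Finset.prod_congr rfl fun j _ => by ring
      _ = (∏ j ∈ Finset.range n, (a - ζ ^ j)) * ∏ j ∈ Finset.range n, (a⁻¹ - ζ ^ j) :=
          Finset.prod_mul_distrib
      _ = (a ^ n - 1) * ((a⁻¹) ^ n - 1) := by rw [auxA hn0 hζ a, auxA hn0 hζ a⁻¹]
  have hsplit : ∏ j ∈ Finset.range n, ((ζ ^ j - a) * (ζ ^ j - a⁻¹))
      = ((1 - a) * (1 - a⁻¹)) * ∏ j ∈ Finset.Ico 1 n, ((ζ ^ j - a) * (ζ ^ j - a⁻¹)) := by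
    rw [Finset.range_eq_Ico, Finset.prod_eq_prod_Ico_succ_bot hn0]
    simp
  have hd1 : (1 - a) * (1 - a⁻¹) ≠ 0 :=
    mul_ne_zero (sub_ne_zero.mpr (Ne.symm ha1)) (sub_ne_zero.mpr (Ne.symm hai1))
  have hprod : ∏ j ∈ Finset.Ico 1 n, ((ζ ^ j - a) * (ζ ^ j - a⁻¹))
      = ((a ^ n - 1) * ((a⁻¹) ^ n - 1)) / ((1 - a) * (1 - a⁻¹)) := by
    rw [eq_div_iff hd1, mul_comm, ← hsplit, key]
  rw [hprod, auxB n ha0]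
  have hw : (a + a⁻¹) / 2 - 1 ≠ 0 := by
    intro h
    apply ha1
    have ha : a * a⁻¹ = 1 := mul_inv_cancel₀ ha0
    have h2 : (a - 1) ^ 2 = 0 := by
      have := congrArg (· * (2 * a)) h
      simp only [zero_mul] at this
      calc (a - 1) ^ 2 = ((a + a⁻¹) / 2 - 1) * (2 * a) - (a * a⁻¹ - 1) := by ring
        _ = 0 := by rw [this, ha]; ring
    exact sub_eq_zero.mp (pow_eq_zero_iff (n := 2) (by norm_num) |>.mp h2)
  have ha : a * a⁻¹ = 1 := mul_inv_cancel₀ ha0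
  have hAn : a ^ n * (a⁻¹) ^ n = 1 := by rw [← mul_pow, ha, one_pow]
  rw [div_eq_div_iff hd1 hw]
  linear_combination ((a + a⁻¹ - 2) / 2) * hAn - ((a ^ n + (a⁻¹) ^ n - 2) / 2) * ha
end

section
/- Let n ≥ 2 and let 1 ≤ s_1 < s_2 < … < s_k < n/2 be integers with gcd(s_1,…,s_k,n) = 1. Then n divides the number of spanning trees of the circulant graph C_n(s_1,…,s_k). -/
open Polynomial Complex Finset
open scoped Classical

namespace Statement9Aux

variable {n : ℕ}

/-- Translation of a graph on `ZMod n` by `a`. -/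
def tr (a : ZMod n) (H : SimpleGraph (ZMod n)) : SimpleGraph (ZMod n) :=
  H.comap (fun x => x - a)

lemma tr_adj (a : ZMod n) (H : SimpleGraph (ZMod n)) (x y : ZMod n) :
    (tr a H).Adj x y ↔ H.Adj (x - a) (y - a) := Iff.rfl

lemma tr_zero (H : SimpleGraph (ZMod n)) : tr 0 H = H := by
  ext x y; simp [tr_adj]

lemma tr_add (a b : ZMod n) (H : SimpleGraph (ZMod n)) :
    tr (a + b) H = tr a (tr b H) := by
  ext x y; simp [tr_adj, sub_sub]

lemma tr_mono (a : ZMod n) {H K : SimpleGraph (ZMod n)} (h : H ≤ K) :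
    tr a H ≤ tr a K := by intro x y hxy; exact h hxy

lemma tr_circ (S : Set (ZMod n)) (a : ZMod n) :
    tr a (SimpleGraph.circulantGraph S) = SimpleGraph.circulantGraph S := by
  ext x y
  simp [tr_adj, SimpleGraph.circulantGraph_adj, sub_sub_sub_cancel_right, sub_left_inj]

/-- The translated graph is isomorphic to the original. -/
def trIso (a : ZMod n) (H : SimpleGraph (ZMod n)) : tr a H ≃g H where
  toEquiv := Equiv.subRight a
  map_rel_iff' := Iff.rfl

lemma isTree_of_iso {V W : Type*} {G : SimpleGraph V} {G' : SimpleGraph W}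
    (e : G ≃g G') (h : G'.IsTree) : G.IsTree := by
  constructor
  · exact e.connected_iff.mpr h.isConnected
  · intro v c hc
    exact h.IsAcyclic (c.map e.toHom) (hc.map e.injective)

lemma tr_isTree (a : ZMod n) {H : SimpleGraph (ZMod n)} (h : H.IsTree) :
    (tr a H).IsTree := isTree_of_iso (trIso a H) h

/-- Key freeness lemma: a nontrivial translation cannot fix a spanning tree of the
circulant graph. -/
lemma key (k : ℕ) (s : Fin k → ℕ) (hn : 2 ≤ n)
    (h1 : ∀ j, 1 ≤ s j) (h2 : ∀ j, 2 * s j < n)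
    (H : SimpleGraph (ZMod n)) (hle : H ≤ circulant n s) (ht : H.IsTree)
    (a : ZMod n) (ha : tr a H = H) : a = 0 := by
  haveI : NeZero n := ⟨by omega⟩
  by_contra ha0
  -- the subgroup of translations preserving H
  set K : AddSubgroup (ZMod n) :=
    { carrier := {c | ∀ x y, H.Adj (x + c) (y + c) ↔ H.Adj x y}
      zero_mem' := by intro x y; simp
      add_mem' := by
        intro c d hc hd x y
        rw [← add_assoc, ← add_assoc, hd, hc]
      neg_mem' := by
        intro c hc x y
        have := hc (x + -c) (y + -c)
        simpa using this.symm } with hKdef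
  have haK : a ∈ K := by
    intro x y
    have h' : H.Adj (x + a) (y + a) ↔ (tr a H).Adj (x + a) (y + a) := by rw [ha]
    rw [h', tr_adj]
    simp
  have hmul : AddSubgroup.zmultiples a ≤ K := AddSubgroup.zmultiples_le_of_mem haK
  set B := AddSubgroup.zmultiples a with hB
  -- action of B on the edge set of H
  have hedge : ∀ c ∈ K, ∀ e ∈ H.edgeSet, Sym2.map (· + c) e ∈ H.edgeSet := by
    intro c hc e he
    induction e with
    | _ x y =>
      rw [Sym2.map_pair_eq]
      rw [SimpleGraph.mem_edgeSet] at he ⊢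
      exact (hc x y).mpr he
  letI : AddAction B ↥H.edgeSet :=
    { vadd := fun b e => ⟨Sym2.map (· + (b : ZMod n)) e.1, hedge _ (hmul b.2) _ e.2⟩
      zero_vadd := by
        intro e
        apply Subtype.ext
        show Sym2.map (· + ((0 : B) : ZMod n)) e.1 = e.1
        have h0 : (fun x : ZMod n => x + ((0 : B) : ZMod n)) = id := by
          funext x; simp
        rw [h0, Sym2.map_id, id_eq]
      add_vadd := by
        intro b c e
        apply Subtype.ext
        show Sym2.map (· + ((b + c : B) : ZMod n)) e.1
            = Sym2.map (· + (b : ZMod n)) (Sym2.map (· + (c : ZMod n)) e.1)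
        rw [Sym2.map_map]
        congr 1
        funext x
        show x + ((b : ZMod n) + (c : ZMod n)) = x + (c : ZMod n) + (b : ZMod n)
        ring }
  set d := addOrderOf a with hd
  have hd1 : d ≠ 1 := fun h => ha0 (AddMonoid.addOrderOf_eq_one_iff.mp h)
  have hdn : d ∣ n := by
    have := addOrderOf_dvd_card (x := a)
    rwa [ZMod.card] at this
  have cardB : Fintype.card B = d := by
    rw [← Nat.card_eq_fintype_card, hB, Nat.card_zmultiples]
  have cardE : Fintype.card ↥H.edgeSet = n - 1 := by
    have h3 := ht.card_edgeFinset
    rw [SimpleGraph.edgeFinset_card] at h3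
    rw [ZMod.card] at h3
    omega
  by_cases hstab : ∀ e : ↥H.edgeSet, AddAction.stabilizer B e = ⊥
  · -- all stabilizers trivial: d divides n - 1, contradiction
    have hcard := AddAction.card_eq_sum_card_addGroup_sub_card_stabilizer B ↥H.edgeSet
    have hterm : ∀ ω : Quotient (AddAction.orbitRel B ↥H.edgeSet),
        Fintype.card B / Fintype.card (AddAction.stabilizer B ω.out) = d := by
      intro ω
      have hb1 : Fintype.card (AddAction.stabilizer B ω.out) = 1 := by
        rw [← Nat.card_eq_fintype_card, hstab]
        simp
      rw [hb1, cardB, Nat.div_one]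
    rw [Finset.sum_congr rfl (fun ω _ => hterm ω), Finset.sum_const, smul_eq_mul,
      cardE] at hcard
    have hdvd : d ∣ n - 1 := Dvd.intro_left _ hcard.symm
    have : d ∣ 1 := by
      have := Nat.dvd_sub hdn hdvd
      rwa [Nat.sub_sub_self (by omega)] at this
    exact hd1 (Nat.dvd_one.mp this)
  · push_neg at hstab
    obtain ⟨e, he⟩ := hstab
    have hex : ∃ b ∈ AddAction.stabilizer B e, b ≠ (0 : B) := by
      by_contra hno
      push_neg at hno
      exact he ((AddSubgroup.eq_bot_iff_forall _).mpr hno)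
    obtain ⟨b, hbmem, hbne⟩ := hex
    have hbe : Sym2.map (· + (b : ZMod n)) e.1 = e.1 :=
      Subtype.ext_iff.mp (AddAction.mem_stabilizer_iff.mp hbmem)
    have hc0 : (b : ZMod n) ≠ 0 := fun h => hbne (Subtype.ext h)
    have hrepex : ∃ x y, e.1 = s(x, y) := Sym2.ind (fun x y => ⟨x, y, rfl⟩) e.1
    obtain ⟨x, y, hrep⟩ := hrepex
    rw [hrep, Sym2.map_pair_eq, Sym2.eq_iff] at hbe
    have hadj : H.Adj x y := by
      have := e.2
      rw [hrep, SimpleGraph.mem_edgeSet] at this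
      exact this
    rcases hbe with ⟨hb1, hb2⟩ | ⟨hb1, hb2⟩
    · exact hc0 (by simpa using hb1)
    · -- y = x + b, and 2b = 0
      have hcc : (b : ZMod n) + (b : ZMod n) = 0 := by
        have : x + ((b : ZMod n) + (b : ZMod n)) = x + 0 := by
          rw [← add_assoc, hb1, hb2, add_zero]
        exact add_left_cancel this
      have hcirc := hle hadj
      rw [circulant, SimpleGraph.circulantGraph_adj] at hcirc
      obtain ⟨hne, hor⟩ := hcirc
      have hyx : y - x = (b : ZMod n) := by rw [← hb1]; ring
      rcases hor with ⟨j, hj⟩ | ⟨j, hj⟩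
      · -- x - y = s j, so s j = -(b), hence 2 * s j = 0 in ZMod n
        have : ((2 * s j : ℕ) : ZMod n) = 0 := by
          push_cast
          rw [two_mul, ← hj]
          have hxy' : x - y = -(b : ZMod n) := by rw [← hb1]; ring
          rw [hxy', ← neg_add, hcc, neg_zero]
        have hdv := (ZMod.natCast_eq_zero_iff _ _).mp this
        have := Nat.le_of_dvd (by have := h1 j; omega) hdv
        have := h2 j
        omega
      · -- y - x = s j
        have : ((2 * s j : ℕ) : ZMod n) = 0 := by
          push_cast
          rw [two_mul, ← hj, hyx, hcc]
        have hdv := (ZMod.natCast_eq_zero_iff _ _).mp this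
        have := Nat.le_of_dvd (by have := h1 j; omega) hdv
        have := h2 j
        omega

end Statement9Aux

/-- `n` divides the number of spanning trees of `C_n(s_1,…,s_k)`. -/
theorem statement9 (n k : ℕ) (hn : 2 ≤ n) (hk : 0 < k) (s : Fin k → ℕ)
    (hmono : StrictMono s) (h1 : ∀ j, 1 ≤ s j) (h2 : ∀ j, 2 * s j < n)
    (hgcd : Nat.gcd (Finset.univ.gcd s) n = 1) :
    n ∣ numSpanningTrees (circulant n s) := by
  haveI : NeZero n := ⟨by omega⟩
  set T : Set (SimpleGraph (ZMod n)) := {H | H ≤ circulant n s ∧ H.IsTree} with hT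
  letI : AddAction (ZMod n) ↥T :=
    { vadd := fun a H => ⟨Statement9Aux.tr a H.1,
        ⟨le_trans (Statement9Aux.tr_mono a H.2.1)
          (le_of_eq (Statement9Aux.tr_circ {x : ZMod n | ∃ j : Fin k, x = (s j : ZMod n)} a)),
         Statement9Aux.tr_isTree a H.2.2⟩⟩
      zero_vadd := fun H => Subtype.ext (Statement9Aux.tr_zero _)
      add_vadd := fun a b H => Subtype.ext (Statement9Aux.tr_add a b _) }
  have hstab : ∀ t : ↥T, AddAction.stabilizer (ZMod n) t = ⊥ := by
    intro t
    rw [AddSubgroup.eq_bot_iff_forall]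
    intro a haa
    have htr : Statement9Aux.tr a t.1 = t.1 :=
      Subtype.ext_iff.mp (AddAction.mem_stabilizer_iff.mp haa)
    exact Statement9Aux.key k s hn h1 h2 t.1 t.2.1 t.2.2 a htr
  have hcard := AddAction.card_eq_sum_card_addGroup_sub_card_stabilizer (ZMod n) ↥T
  have hterm : ∀ ω : Quotient (AddAction.orbitRel (ZMod n) ↥T),
      Fintype.card (ZMod n) / Fintype.card (AddAction.stabilizer (ZMod n) ω.out) = n := by
    intro ω
    have hb1 : Fintype.card (AddAction.stabilizer (ZMod n) ω.out) = 1 := by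
      rw [← Nat.card_eq_fintype_card, hstab]
      simp
    rw [hb1, ZMod.card, Nat.div_one]
  rw [Finset.sum_congr rfl (fun ω _ => hterm ω), Finset.sum_const, smul_eq_mul] at hcard
  have hnum : numSpanningTrees (circulant n s) = Fintype.card ↥T := by
    rw [numSpanningTrees, ← Nat.card_coe_set_eq, Nat.card_eq_fintype_card]
  rw [hnum, hcard]
  exact Dvd.intro_left _ rfl
end
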